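/- Let φ: B_n × F_n → T be a 1-cocycle for Artin's representation α (i.e., φ(ab,x) = φ(a,α_b(x))φ(b,x) and φ(a,xy) = φ(a,x)φ(a,y)). Then for all 1 ≤ i ≤ n−2, φ(s_{i+1}, x_i) = φ(s_i, x_{i+2}). -/

import Mathlib

/-- The braid relations on `m` generators `s_0, …, s_{m-1}`. -/
def braidRels (m : ℕ) : Set (FreeGroup (Fin m)) :=
  { r | (∃ i j : Fin m, (i : ℕ) + 1 = (j : ℕ) ∧
          r = FreeGroup.of i * FreeGroup.of j * FreeGroup.of i *
              (FreeGroup.of j * FreeGroup.of i * FreeGroup.of j)⁻¹) ∨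
        (∃ i j : Fin m, (i : ℕ) + 2 ≤ (j : ℕ) ∧
          r = FreeGroup.of i * FreeGroup.of j * (FreeGroup.of j * FreeGroup.of i)⁻¹) }

/-- The braid group `B_n` on `n` strands, with `n - 1` generators. -/
abbrev BraidGroup (n : ℕ) := PresentedGroup (braidRels (n - 1))

/-- The standard generators of the braid group. -/
def braidGen {n : ℕ} (i : Fin (n - 1)) : BraidGroup n := PresentedGroup.of i

def finInc {n : ℕ} (i : Fin (n - 1)) : Fin n := ⟨(i : ℕ), by omega⟩

def finSucc' {n : ℕ} (i : Fin (n - 1)) : Fin n := ⟨(i : ℕ) + 1, by omega⟩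

/-- `α : B_n → Aut(F_n)` is Artin's representation if it acts on the generators in
the prescribed way: `α(s_i)(x_i) = x_{i+1}`, `α(s_i)(x_{i+1}) = x_{i+1}⁻¹ x_i x_{i+1}`,
and `α(s_i)(x_j) = x_j` otherwise. -/
def IsArtinRep {n : ℕ} (α : BraidGroup n →* MulAut (FreeGroup (Fin n))) : Prop :=
  ∀ (i : Fin (n - 1)) (j : Fin n),
    α (braidGen i) (FreeGroup.of j) =
      if (j : ℕ) = (i : ℕ) then FreeGroup.of (finSucc' i)
      else if (j : ℕ) = (i : ℕ) + 1 then
        (FreeGroup.of (finSucc' i))⁻¹ * FreeGroup.of (finInc i) * FreeGroup.of (finSucc' i)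
      else FreeGroup.of j

/-- The element `x_1 x_2 ⋯ x_n` of the free group `F_n`. -/
def fullWord (n : ℕ) : FreeGroup (Fin n) :=
  (List.ofFn (fun j : Fin n => FreeGroup.of j)).prod

/-- The central element `z = (s_1 ⋯ s_{n-1})^n` of the braid group `B_n`. -/
def braidZ (n : ℕ) : BraidGroup n :=
  ((List.ofFn (fun i : Fin (n - 1) => braidGen i)).prod) ^ n


lemma braid_rel_gen {n : ℕ} (i j : Fin (n - 1)) (h : (i : ℕ) + 1 = (j : ℕ)) :
    braidGen i * braidGen j * braidGen i = braidGen j * braidGen i * braidGen j := by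
  have hr : (FreeGroup.of i * FreeGroup.of j * FreeGroup.of i *
      (FreeGroup.of j * FreeGroup.of i * FreeGroup.of j)⁻¹) ∈ braidRels (n - 1) :=
    Or.inl ⟨i, j, h, rfl⟩
  have h1 : PresentedGroup.mk (braidRels (n - 1))
      (FreeGroup.of i * FreeGroup.of j * FreeGroup.of i *
        (FreeGroup.of j * FreeGroup.of i * FreeGroup.of j)⁻¹) = 1 :=
    (QuotientGroup.eq_one_iff _).mpr (Subgroup.subset_normalClosure hr)
  have h2 := h1
  rw [map_mul, map_inv, mul_inv_eq_one] at h2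
  simpa [braidGen, PresentedGroup.of, map_mul] using h2

/-- For a 1-cocycle `φ` on `B_n × F_n` for Artin's representation,
`φ(s_{i+1}, x_i) = φ(s_i, x_{i+2})` for all `1 ≤ i ≤ n-2` (here 0-indexed). -/
theorem cocycle_relation_one (n : ℕ)
    (α : BraidGroup n →* MulAut (FreeGroup (Fin n))) (hα : IsArtinRep α)
    (φ : BraidGroup n → FreeGroup (Fin n) → Circle)
    (hc1 : ∀ (a b : BraidGroup n) (x : FreeGroup (Fin n)),
      φ (a * b) x = φ a (α b x) * φ b x)
    (hc2 : ∀ (a : BraidGroup n) (x y : FreeGroup (Fin n)),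
      φ a (x * y) = φ a x * φ a y) :
    ∀ (i : ℕ) (hi : i + 1 < n - 1),
      φ (braidGen ⟨i + 1, hi⟩) (FreeGroup.of ⟨i, by omega⟩)
        = φ (braidGen ⟨i, by omega⟩) (FreeGroup.of ⟨i + 2, by omega⟩) := by
  intro i hi
  have hone : ∀ a : BraidGroup n, φ a 1 = 1 := by
    intro a
    have := hc2 a 1 1
    rw [mul_one] at this
    exact mul_eq_left.mp this.symm
  have hinv : ∀ (a : BraidGroup n) (x : FreeGroup (Fin n)), φ a x⁻¹ = (φ a x)⁻¹ := by
    intro a x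
    have := hc2 a x⁻¹ x
    rw [inv_mul_cancel, hone] at this
    exact eq_inv_of_mul_eq_one_left this.symm
  have hconj : ∀ (a : BraidGroup n) (x y : FreeGroup (Fin n)),
      φ a (y⁻¹ * x * y) = φ a x := by
    intro a x y
    rw [hc2, hc2, hinv, mul_comm ((φ a y)⁻¹) (φ a x), mul_assoc, inv_mul_cancel, mul_one]
  -- generators and letters
  set I : Fin (n - 1) := ⟨i, by omega⟩ with hI
  set J : Fin (n - 1) := ⟨i + 1, hi⟩ with hJ
  set a := braidGen I with ha
  set b := braidGen J with hb
  set x0 : FreeGroup (Fin n) := FreeGroup.of ⟨i, by omega⟩ with hx0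
  set x1 : FreeGroup (Fin n) := FreeGroup.of ⟨i + 1, by omega⟩ with hx1
  set x2 : FreeGroup (Fin n) := FreeGroup.of ⟨i + 2, by omega⟩ with hx2
  have hfI : finSucc' I = (⟨i + 1, by omega⟩ : Fin n) := by simp [finSucc', hI]
  have hfI' : finInc I = (⟨i, by omega⟩ : Fin n) := by simp [finInc, hI]
  have hfJ : finSucc' J = (⟨i + 2, by omega⟩ : Fin n) := by simp [finSucc', hJ]
  have hfJ' : finInc J = (⟨i + 1, by omega⟩ : Fin n) := by simp [finInc, hJ]
  -- action facts
  have haX2 : α a x2 = x2 := by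
    rw [hx2, hα I ⟨i + 2, by omega⟩]
    simp [hI]
  have haX1 : α a x1 = x1⁻¹ * x0 * x1 := by
    rw [hx1, hα I ⟨i + 1, by omega⟩]
    simp [hI, hfI, hfI', hx0, hx1, finSucc', finInc]
  have hbX2 : α b x2 = x2⁻¹ * x1 * x2 := by
    rw [hx2, hα J ⟨i + 2, by omega⟩]
    simp [hJ, hfJ, hfJ', hx1, hx2, finSucc', finInc]
  -- the braid relation
  have hrel : a * b * a = b * a * b := braid_rel_gen I J (by simp [hI, hJ])
  -- expand φ on both sides at x2
  have hL : φ (a * b * a) x2 = φ a x1 * φ b x2 * φ a x2 := by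
    rw [hc1 (a * b) a, hc1 a b, haX2, hbX2, hconj]
  have hR : φ (b * a * b) x2 = φ b x0 * φ a x1 * φ b x2 := by
    rw [hc1 (b * a) b, hc1 b a, hbX2]
    have : α a (x2⁻¹ * x1 * x2) = x2⁻¹ * (x1⁻¹ * x0 * x1) * x2 := by
      rw [map_mul, map_mul, map_inv, haX2, haX1]
    rw [this, hconj, hconj, hconj]
  have key : φ a x1 * φ b x2 * φ a x2 = φ b x0 * φ a x1 * φ b x2 := by
    rw [← hL, ← hR, hrel]
  have key2 : φ a x1 * (φ b x2 * φ a x2) = φ a x1 * (φ b x2 * φ b x0) := by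
    rw [← mul_assoc, key]
    ac_rfl
  exact (mul_left_cancel (mul_left_cancel key2)).symm
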